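/- arXiv:1305.6031 — 2 statements merged into one kernel-verified Lean document; each statement's English description precedes it below -/
import Mathlib

section
/- For fixed k, the generating function for cφ_k(n) is the constant term in z of ∏_{m≥0} (1+z q^{m+1})^k (1+z^{-1} q^m)^k; i.e., the coefficient of z^0 q^n in this product equals the number of k-colored generalized Frobenius partitions of n. -/
/-- The truncation at level `M` (factors `m = 0, …, M`) of Andrews' infinite product
`∏_{m ≥ 0} (1 + z q^{m+1})^k (1 + z^{-1} q^m)^k`, viewed as a Laurent polynomial in `z`
over `ℤ⟦q⟧`.  Here `T 1` plays the role of `z` and `PowerSeries.X` the role of `q`. -/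
noncomputable def frobProd (k M : ℕ) : LaurentPolynomial (PowerSeries ℤ) :=
  ∏ m ∈ Finset.range (M + 1),
    ((1 + LaurentPolynomial.C (PowerSeries.X ^ (m + 1)) * LaurentPolynomial.T 1) ^ k *
      (1 + LaurentPolynomial.C (PowerSeries.X ^ m) * LaurentPolynomial.T (-1)) ^ k)

/-- `cφ_k(n)`: the coefficient of `z^0 q^n` in Andrews' infinite product.  Since every
factor with index `m > n` is `≡ 1 (mod q^{n+1})`, this coefficient is already attained by
the truncation `frobProd k n`. -/
noncomputable def cphi (k n : ℕ) : ℤ :=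
  PowerSeries.coeff n (AddMonoidAlgebra.coeff (frobProd k n) 0)

/-- A `k`-colored generalized Frobenius partition of `n`: a two-rowed array of colored
nonnegative integers (elements of `ℕ × Fin k`), both rows of the same length `len`,
each row strictly decreasing with respect to the fixed linear order on colored integers
given by the encoding `(a, c) ↦ k * a + c` (so the entries of a row are distinct as
colored integers), and such that the sum of all entries plus the number of columns
equals `n`. -/
structure GenFrobeniusPartition (k n : ℕ) where
  len : ℕ
  top : Fin len → ℕ × Fin k
  bot : Fin len → ℕ × Fin k
  top_anti : StrictAnti fun i => k * (top i).1 + ((top i).2 : ℕ)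
  bot_anti : StrictAnti fun i => k * (bot i).1 + ((bot i).2 : ℕ)
  sum_eq : (∑ i, (top i).1) + (∑ i, (bot i).1) + len = n

namespace AndrewsAux

open Finset LaurentPolynomial

variable {k n : ℕ}

/-- The encoding of colored integers as natural numbers. -/
def enc (k : ℕ) (x : ℕ × Fin k) : ℕ := k * x.1 + x.2

lemma enc_injective (hk : 0 < k) : Function.Injective (enc k) := by
  rintro ⟨a, c⟩ ⟨b, d⟩ h
  have hc := c.2; have hd := d.2
  simp only [enc] at h
  have h1 : a = b := by
    have h2 := congrArg (· / k) h
    simpa [Nat.mul_add_div hk, Nat.div_eq_of_lt hc, Nat.div_eq_of_lt hd] using h2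
  subst h1
  have : (c : ℕ) = d := by omega
  simp [Prod.ext_iff, Fin.ext_iff, this]

/-- The decoding of natural numbers to colored integers. -/
def dec (hk : 0 < k) (m : ℕ) : ℕ × Fin k := (m / k, ⟨m % k, Nat.mod_lt _ hk⟩)

lemma enc_dec (hk : 0 < k) (m : ℕ) : enc k (dec hk m) = m := by
  simp [enc, dec, Nat.div_add_mod]

lemma dec_enc (hk : 0 < k) (x : ℕ × Fin k) : dec hk (enc k x) = x :=
  enc_injective hk (enc_dec hk _)

lemma prod_term {ι : Type*} (A : Finset ι) (g : ι → ℕ) (t : ℤ) :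
    (∏ i ∈ A, C ((PowerSeries.X : PowerSeries ℤ) ^ g i) * T t)
      = C ((PowerSeries.X : PowerSeries ℤ) ^ (∑ i ∈ A, g i)) * T ((A.card : ℤ) * t) := by
  rw [Finset.prod_mul_distrib, ← map_prod, Finset.prod_pow_eq_pow_sum, Finset.prod_const, T_pow]

lemma prod_one_add {ι : Type*} [DecidableEq ι] (s : Finset ι) (g : ι → ℕ) (t : ℤ) :
    (∏ i ∈ s, (1 + C ((PowerSeries.X : PowerSeries ℤ) ^ g i) * T t))
      = ∑ A ∈ s.powerset,
          C ((PowerSeries.X : PowerSeries ℤ) ^ (∑ i ∈ A, g i)) * T ((A.card : ℤ) * t) := by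
  rw [Finset.prod_congr rfl
    (fun i _ => add_comm 1 (C ((PowerSeries.X : PowerSeries ℤ) ^ g i) * T t)),
    Finset.prod_add]
  refine Finset.sum_congr rfl fun A _ => ?_
  rw [prod_term, Finset.prod_const_one, mul_one]

/-- The index set for factors. -/
def S1 (k M : ℕ) : Finset (ℕ × Fin k) := Finset.range (M + 1) ×ˢ Finset.univ

lemma frobProd_eq (k M : ℕ) :
    frobProd k M =
      (∑ A ∈ (S1 k M).powerset,
        C ((PowerSeries.X : PowerSeries ℤ) ^ (∑ i ∈ A, (i.1 + 1))) * T ((A.card : ℤ) * 1)) *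
      (∑ B ∈ (S1 k M).powerset,
        C ((PowerSeries.X : PowerSeries ℤ) ^ (∑ i ∈ B, i.1)) * T ((B.card : ℤ) * (-1))) := by
  rw [← prod_one_add (S1 k M) (fun i => i.1 + 1) 1, ← prod_one_add (S1 k M) (fun i => i.1) (-1)]
  unfold frobProd
  rw [Finset.prod_mul_distrib]
  congr 1 <;>
  · rw [S1, Finset.prod_product]
    exact Finset.prod_congr rfl fun m _ => by
      simp [Finset.prod_const]

lemma frobProd_eq2 (k M : ℕ) :
    frobProd k M = ∑ p ∈ (S1 k M).powerset ×ˢ (S1 k M).powerset,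
      AddMonoidAlgebra.single ((p.1.card : ℤ) - p.2.card)
        ((PowerSeries.X : PowerSeries ℤ) ^ ((∑ i ∈ p.1, (i.1 + 1)) + ∑ i ∈ p.2, i.1)) := by
  rw [frobProd_eq, Finset.sum_mul_sum, ← Finset.sum_product']
  refine Finset.sum_congr rfl fun p _ => ?_
  rw [mul_mul_mul_comm, ← map_mul, ← pow_add, ← T_add, single_eq_C_mul_T]
  congr 1
  ring_nf

/-- The counting finset of pairs of finsets. -/
def Pfin (k n : ℕ) : Finset (Finset (ℕ × Fin k) × Finset (ℕ × Fin k)) :=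
  ((S1 k n).powerset ×ˢ (S1 k n).powerset).filter
    (fun p => p.1.card = p.2.card ∧ (∑ a ∈ p.1, a.1) + (∑ b ∈ p.2, b.1) + p.1.card = n)

lemma cphi_eq_card (k n : ℕ) : cphi k n = ((Pfin k n).card : ℤ) := by
  classical
  unfold cphi
  rw [frobProd_eq2, AddMonoidAlgebra.coeff_sum, Finset.sum_apply']
  simp only [AddMonoidAlgebra.coeff_single, Finsupp.single_apply]
  rw [map_sum]
  simp only [apply_ite (PowerSeries.coeff (R := ℤ) n), map_zero, PowerSeries.coeff_X_pow, ← ite_and]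
  rw [Finset.sum_boole]
  refine Nat.cast_inj.mpr (congrArg Finset.card ?_)
  rw [Pfin]
  refine Finset.filter_congr fun p hp => ?_
  have hx : ∑ i ∈ p.1, (i.1 + 1) = (∑ i ∈ p.1, i.1) + p.1.card := by
    rw [Finset.sum_add_distrib, Finset.sum_const, smul_eq_mul, mul_one]
  constructor
  · rintro ⟨h1, h2⟩
    have hcard : p.1.card = p.2.card := by exact_mod_cast sub_eq_zero.mp h1
    exact ⟨hcard, by omega⟩
  · rintro ⟨h1, h2⟩
    exact ⟨sub_eq_zero.mpr (by exact_mod_cast h1), by omega⟩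

lemma rev_strictAnti (m : ℕ) : StrictAnti (Fin.rev : Fin m → Fin m) :=
  fun _ _ h => Fin.rev_lt_rev.mpr h

lemma strictAnti_eq_of_image_eq {m : ℕ} {f g : Fin m → ℕ} (hf : StrictAnti f) (hg : StrictAnti g)
    (h : Finset.image f Finset.univ = Finset.image g Finset.univ) : f = g := by
  have hf' : StrictMono (f ∘ Fin.rev) := hf.comp (rev_strictAnti m)
  have hg' : StrictMono (g ∘ Fin.rev) := hg.comp (rev_strictAnti m)
  have hrange : Set.range (f ∘ Fin.rev) = Set.range (g ∘ Fin.rev) := by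
    rw [Fin.rev_surjective.range_comp, Fin.rev_surjective.range_comp]
    have hf2 : Set.range f = ↑(Finset.image f Finset.univ) := by
      rw [Finset.coe_image, Finset.coe_univ, Set.image_univ]
    have hg2 : Set.range g = ↑(Finset.image g Finset.univ) := by
      rw [Finset.coe_image, Finset.coe_univ, Set.image_univ]
    rw [hf2, hg2, h]
  haveI : WellFoundedLT (Fin m) := inferInstance
  have := (StrictMono.range_inj (β := Fin m) (γ := ℕ) hf' hg').mp hrange
  funext i
  have h2 := congrFun this i.rev
  simpa [Function.comp, Fin.rev_rev] using h2

/-- The forward map from partitions to pairs of finsets. -/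
def Φ (P : GenFrobeniusPartition k n) : Finset (ℕ × Fin k) × Finset (ℕ × Fin k) :=
  (Finset.image P.top Finset.univ, Finset.image P.bot Finset.univ)

lemma top_enc (P : GenFrobeniusPartition k n) :
    (fun i => k * (P.top i).1 + ((P.top i).2 : ℕ)) = enc k ∘ P.top := rfl

lemma bot_enc (P : GenFrobeniusPartition k n) :
    (fun i => k * (P.bot i).1 + ((P.bot i).2 : ℕ)) = enc k ∘ P.bot := rfl

lemma top_inj (P : GenFrobeniusPartition k n) : Function.Injective P.top := by
  have := P.top_anti.injective
  rw [top_enc] at this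
  exact Function.Injective.of_comp this

lemma bot_inj (P : GenFrobeniusPartition k n) : Function.Injective P.bot := by
  have := P.bot_anti.injective
  rw [bot_enc] at this
  exact Function.Injective.of_comp this

lemma Φ_mem (P : GenFrobeniusPartition k n) : Φ P ∈ Pfin k n := by
  classical
  have hsum := P.sum_eq
  have htop_le : ∀ i, (P.top i).1 ≤ n := by
    intro i
    have h1 : (P.top i).1 ≤ ∑ j, (P.top j).1 :=
      Finset.single_le_sum (f := fun j => (P.top j).1) (fun _ _ => Nat.zero_le _)
        (Finset.mem_univ i)
    omega
  have hbot_le : ∀ i, (P.bot i).1 ≤ n := by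
    intro i
    have h1 : (P.bot i).1 ≤ ∑ j, (P.bot j).1 :=
      Finset.single_le_sum (f := fun j => (P.bot j).1) (fun _ _ => Nat.zero_le _)
        (Finset.mem_univ i)
    omega
  have hcard_top : (Finset.image P.top Finset.univ).card = P.len := by
    rw [Finset.card_image_of_injective _ (top_inj P), Finset.card_univ, Fintype.card_fin]
  have hcard_bot : (Finset.image P.bot Finset.univ).card = P.len := by
    rw [Finset.card_image_of_injective _ (bot_inj P), Finset.card_univ, Fintype.card_fin]
  have hsum_top : (∑ a ∈ Finset.image P.top Finset.univ, a.1) = ∑ i, (P.top i).1 :=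
    Finset.sum_image (fun i _ j _ h => top_inj P h)
  have hsum_bot : (∑ a ∈ Finset.image P.bot Finset.univ, a.1) = ∑ i, (P.bot i).1 :=
    Finset.sum_image (fun i _ j _ h => bot_inj P h)
  rw [Pfin, Finset.mem_filter]
  refine ⟨Finset.mem_product.mpr ⟨Finset.mem_powerset.mpr ?_, Finset.mem_powerset.mpr ?_⟩, ?_, ?_⟩
  · intro x hx
    obtain ⟨i, -, rfl⟩ := Finset.mem_image.mp hx
    exact Finset.mem_product.mpr
      ⟨Finset.mem_range.mpr (Nat.lt_succ_of_le (htop_le i)), Finset.mem_univ _⟩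
  · intro x hx
    obtain ⟨i, -, rfl⟩ := Finset.mem_image.mp hx
    exact Finset.mem_product.mpr
      ⟨Finset.mem_range.mpr (Nat.lt_succ_of_le (hbot_le i)), Finset.mem_univ _⟩
  · show (Finset.image P.top Finset.univ).card = (Finset.image P.bot Finset.univ).card
    rw [hcard_top, hcard_bot]
  · show (∑ a ∈ Finset.image P.top Finset.univ, a.1) +
        (∑ b ∈ Finset.image P.bot Finset.univ, b.1) +
        (Finset.image P.top Finset.univ).card = n
    rw [hcard_top, hsum_top, hsum_bot]; exact hsum

lemma Φ_inj (hk : 0 < k) : Function.Injective (Φ (k := k) (n := n)) := by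
  rintro ⟨l₁, t₁, b₁, ht₁, hb₁, hs₁⟩ ⟨l₂, t₂, b₂, ht₂, hb₂, hs₂⟩ h
  simp only [Φ, Prod.mk.injEq] at h
  obtain ⟨hT, hB⟩ := h
  have hl : l₁ = l₂ := by
    have h1 := congrArg Finset.card hT
    rwa [Finset.card_image_of_injective _ (top_inj ⟨l₁, t₁, b₁, ht₁, hb₁, hs₁⟩),
      Finset.card_image_of_injective _ (top_inj ⟨l₂, t₂, b₂, ht₂, hb₂, hs₂⟩),
      Finset.card_univ, Finset.card_univ, Fintype.card_fin, Fintype.card_fin] at h1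
  subst hl
  have ht : t₁ = t₂ := by
    have himg : Finset.image (enc k ∘ t₁) Finset.univ = Finset.image (enc k ∘ t₂) Finset.univ := by
      rw [← Finset.image_image, ← Finset.image_image, hT]
    have := strictAnti_eq_of_image_eq (top_enc ⟨l₁, t₁, b₁, ht₁, hb₁, hs₁⟩ ▸ ht₁)
      (top_enc ⟨l₁, t₂, b₂, ht₂, hb₂, hs₂⟩ ▸ ht₂) himg
    funext i
    exact enc_injective hk (congrFun this i)
  have hb : b₁ = b₂ := by
    have himg : Finset.image (enc k ∘ b₁) Finset.univ = Finset.image (enc k ∘ b₂) Finset.univ := by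
      rw [← Finset.image_image, ← Finset.image_image, hB]
    have := strictAnti_eq_of_image_eq (bot_enc ⟨l₁, t₁, b₁, ht₁, hb₁, hs₁⟩ ▸ hb₁)
      (bot_enc ⟨l₁, t₂, b₂, ht₂, hb₂, hs₂⟩ ▸ hb₂) himg
    funext i
    exact enc_injective hk (congrFun this i)
  subst ht; subst hb
  rfl

lemma image_dec_eq (hk : 0 < k) {m : ℕ} (A : Finset (ℕ × Fin k))
    (h : (A.image (enc k)).card = m) :
    Finset.image (fun i : Fin m => dec hk ((A.image (enc k)).orderEmbOfFin h i.rev))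
      Finset.univ = A := by
  apply Finset.coe_injective
  rw [Finset.coe_image, Finset.coe_univ, Set.image_univ]
  have h1 : Set.range (fun i : Fin m => dec hk ((A.image (enc k)).orderEmbOfFin h i.rev))
      = dec hk '' Set.range (fun i : Fin m => (A.image (enc k)).orderEmbOfFin h i.rev) := by
    rw [← Set.range_comp]; rfl
  have h2 : Set.range (fun i : Fin m => (A.image (enc k)).orderEmbOfFin h i.rev)
      = Set.range ((A.image (enc k)).orderEmbOfFin h) :=
    Fin.rev_surjective.range_comp _
  rw [h1, h2, Finset.range_orderEmbOfFin, Finset.coe_image, Set.image_image]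
  simp [dec_enc hk]

lemma Φ_surj (hk : 0 < k) (p : Finset (ℕ × Fin k) × Finset (ℕ × Fin k)) (hp : p ∈ Pfin k n) :
    ∃ P : GenFrobeniusPartition k n, Φ P = p := by
  classical
  obtain ⟨A, B⟩ := p
  rw [Pfin, Finset.mem_filter] at hp
  obtain ⟨-, hcard, hsum⟩ := hp
  dsimp only at hcard hsum
  have hA : (A.image (enc k)).card = A.card := Finset.card_image_of_injective _ (enc_injective hk)
  have hB : (B.image (enc k)).card = A.card := by
    rw [Finset.card_image_of_injective _ (enc_injective hk)]; exact hcard.symm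
  set u := (A.image (enc k)).orderEmbOfFin hA with hu
  set v := (B.image (enc k)).orderEmbOfFin hB with hv
  have keyt : (fun i : Fin A.card => k * ((dec hk (u i.rev)).1) + ((dec hk (u i.rev)).2 : ℕ))
      = fun i => u i.rev := funext fun i => enc_dec hk _
  have keyb : (fun i : Fin A.card => k * ((dec hk (v i.rev)).1) + ((dec hk (v i.rev)).2 : ℕ))
      = fun i => v i.rev := funext fun i => enc_dec hk _
  have himgA := image_dec_eq hk A hA
  have himgB := image_dec_eq hk B hB
  have htinj : Function.Injective (fun i : Fin A.card => dec hk (u i.rev)) := by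
    intro i j hij
    have h2 : u i.rev = u j.rev := by
      have h3 := congrArg (enc k) hij
      rwa [enc_dec hk, enc_dec hk] at h3
    exact (u.strictMono.comp_strictAnti (rev_strictAnti _)).injective h2
  have hbinj : Function.Injective (fun i : Fin A.card => dec hk (v i.rev)) := by
    intro i j hij
    have h2 : v i.rev = v j.rev := by
      have h3 := congrArg (enc k) hij
      rwa [enc_dec hk, enc_dec hk] at h3
    exact (v.strictMono.comp_strictAnti (rev_strictAnti _)).injective h2
  refine ⟨⟨A.card, fun i => dec hk (u i.rev), fun i => dec hk (v i.rev), ?_, ?_, ?_⟩, ?_⟩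
  · rw [keyt]; exact u.strictMono.comp_strictAnti (rev_strictAnti _)
  · rw [keyb]; exact v.strictMono.comp_strictAnti (rev_strictAnti _)
  · have hst : (∑ i : Fin A.card, (dec hk (u i.rev)).1) = ∑ a ∈ A, a.1 := by
      conv_rhs => rw [← himgA]
      rw [Finset.sum_image (fun i _ j _ h => htinj h)]
    have hsb : (∑ i : Fin A.card, (dec hk (v i.rev)).1) = ∑ b ∈ B, b.1 := by
      conv_rhs => rw [← himgB]
      rw [Finset.sum_image (fun i _ j _ h => hbinj h)]
    rw [hst, hsb]; exact hsum
  · rw [Φ]; exact Prod.ext himgA himgB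

end AndrewsAux

open AndrewsAux

/-- Andrews' Theorem: the coefficient of `z^0 q^n` in
`∏_{m ≥ 0} (1 + z q^{m+1})^k (1 + z^{-1} q^m)^k` is the number of `k`-colored
generalized Frobenius partitions of `n`. -/
theorem cphi_eq_card_genFrobeniusPartition (k n : ℕ) (hk : 0 < k) :
    cphi k n = Nat.card (GenFrobeniusPartition k n) := by
  have e : GenFrobeniusPartition k n ≃ {p // p ∈ Pfin k n} :=
    Equiv.ofBijective (fun P => ⟨Φ P, Φ_mem P⟩)
      ⟨fun a b h => Φ_inj hk (congrArg Subtype.val h),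
       fun q => by
        obtain ⟨P, hP⟩ := Φ_surj hk q.1 q.2
        exact ⟨P, Subtype.ext hP⟩⟩
  have hc : Nat.card (GenFrobeniusPartition k n) = (Pfin k n).card := by
    rw [Nat.card_congr e, Nat.card_eq_finsetCard]
  rw [hc, cphi_eq_card]
end

section
/- For all N ≥ 1 and all n ≥ 0, cφ_{3N}(3n+2) ≡ 0 (mod 3). -/
open LaurentPolynomial

/-- The subring of Laurent polynomials over `ℤ⟦q⟧` all of whose coefficients of `q^n`
with `3 ∤ n` are divisible by `3`. -/
noncomputable def Sring : Subring (LaurentPolynomial (PowerSeries ℤ)) where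
  carrier := {p | ∀ k : ℤ, ∀ n : ℕ, ¬ (3 ∣ n) → (3 : ℤ) ∣ PowerSeries.coeff n (AddMonoidAlgebra.coeff p k)}
  zero_mem' := by
    intro k n hn
    simp
  one_mem' := by
    intro k n hn
    have hn0 : n ≠ 0 := by rintro rfl; exact hn ⟨0, rfl⟩
    rw [AddMonoidAlgebra.one_def, AddMonoidAlgebra.coeff_single, Finsupp.single_apply]
    split_ifs
    · simp [PowerSeries.coeff_one, hn0]
    · simp
  add_mem' := by
    intro p q hp hq k n hn
    simpa using dvd_add (hp k n hn) (hq k n hn)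
  neg_mem' := by
    intro p hp k n hn
    rw [AddMonoidAlgebra.coeff_neg, Finsupp.neg_apply, map_neg]
    exact (hp k n hn).neg_right
  mul_mem' := by
    intro p q hp hq k n hn
    classical
    rw [AddMonoidAlgebra.coeff_mul]
    rw [Finsupp.sum, map_sum]
    refine Finset.dvd_sum fun a₁ ha₁ => ?_
    rw [Finsupp.sum, map_sum]
    refine Finset.dvd_sum fun a₂ ha₂ => ?_
    by_cases h : a₁ + a₂ = k
    · simp only [h, if_true]
      rw [PowerSeries.coeff_mul]
      refine Finset.dvd_sum fun x hx => ?_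
      have hsum : x.1 + x.2 = n := Finset.HasAntidiagonal.mem_antidiagonal.mp hx
      by_cases h1 : (3 : ℕ) ∣ x.1
      · have h2 : ¬ (3 : ℕ) ∣ x.2 := by
          intro h2; exact hn (hsum ▸ dvd_add h1 h2)
        exact Dvd.dvd.mul_left (hq a₂ x.2 h2) _
      · exact Dvd.dvd.mul_right (hp a₁ x.1 h1) _
    · simp [h]

lemma single_mem_Sring (m : ℕ) (j : ℤ) (hm : 3 ∣ m) :
    LaurentPolynomial.C ((PowerSeries.X : PowerSeries ℤ) ^ m) * T j ∈ Sring := by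
  intro k n hn
  rw [← single_eq_C_mul_T]
  rcases eq_or_ne j k with rfl | hk
  · rw [AddMonoidAlgebra.coeff_single, Finsupp.single_apply, if_pos rfl, PowerSeries.coeff_X_pow]
    have : n ≠ m := by rintro rfl; exact hn hm
    simp [this]
  · rw [AddMonoidAlgebra.coeff_single, Finsupp.single_apply, if_neg hk]
    simp

lemma smul_mem_Sring (p : LaurentPolynomial (PowerSeries ℤ)) : (3 : ℤ) • p ∈ Sring := by
  intro k n hn
  rw [AddMonoidAlgebra.coeff_smul_apply, map_zsmul]
  exact ⟨PowerSeries.coeff n (AddMonoidAlgebra.coeff p k), by rw [smul_eq_mul]⟩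

lemma cube_mem_Sring (m : ℕ) (j : ℤ) :
    (1 + LaurentPolynomial.C ((PowerSeries.X : PowerSeries ℤ) ^ m) * T j) ^ 3 ∈ Sring := by
  set x := LaurentPolynomial.C ((PowerSeries.X : PowerSeries ℤ) ^ m) * T j with hx
  have hx3 : x ^ 3 =
      LaurentPolynomial.C ((PowerSeries.X : PowerSeries ℤ) ^ (3 * m)) * T (3 * j) := by
    rw [hx, mul_pow, ← map_pow, ← pow_mul, T_pow]
    ring_nf
  have key : (1 + x) ^ 3 = (1 + x ^ 3) + (3 : ℤ) • (x + x ^ 2) := by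
    rw [zsmul_eq_mul]; push_cast; ring
  rw [key]
  refine Subring.add_mem _ (Subring.add_mem _ (Subring.one_mem _) ?_) (smul_mem_Sring _)
  rw [hx3]
  exact single_mem_Sring (3 * m) (3 * j) ⟨m, rfl⟩

lemma frobProd_mem (N M : ℕ) : frobProd (3 * N) M ∈ Sring := by
  refine Subring.prod_mem _ fun m _ => ?_
  refine Subring.mul_mem _ ?_ ?_ <;>
    rw [pow_mul] <;>
    exact Subring.pow_mem _ (cube_mem_Sring _ _) N

/-- For all `N ≥ 1` and `n ≥ 0`, `cφ_{3N}(3n+2) ≡ 0 (mod 3)`. -/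
theorem cphi_three (N : ℕ) (hN : 1 ≤ N) (n : ℕ) : (3 : ℤ) ∣ cphi (3 * N) (3 * n + 2) := by
  have h := frobProd_mem N (3 * n + 2) 0 (3 * n + 2) (by omega)
  exact h
end
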